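/- arXiv:1407.3985 — 6 statements merged into one kernel-verified Lean document; each statement's English description precedes it below -/
import Mathlib

section
/- The function f₀ defined by f₀(r) = 2γ_d ∫₀^r ((u²/(1+u²))^{-(d-1)/2} ∫₀^u v^{d-1}/(1+v²)^{(d+1)/2} dv) du satisfies f₀(0+) = 0 and f₀(r)/r → 1 as r → ∞. -/
open MeasureTheory Real Filter intervalIntegral Set

lemma coe_beta_integrand (a b x : ℝ) (hx : x ∈ Set.Icc (0:ℝ) 1) :
    ((x ^ (a-1) * (1-x) ^ (b-1) : ℝ) : ℂ) = (x:ℂ) ^ ((a:ℂ) - 1) * (1 - (x:ℂ)) ^ ((b:ℂ) - 1) := by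
  have h1 : ((x ^ (a-1) : ℝ) : ℂ) = (x:ℂ) ^ ((a:ℂ) - 1) := by
    rw [Complex.ofReal_cpow hx.1]; push_cast; rfl
  have h2 : (((1-x) ^ (b-1) : ℝ) : ℂ) = (1 - (x:ℂ)) ^ ((b:ℂ) - 1) := by
    rw [Complex.ofReal_cpow (by linarith [hx.2])]; push_cast; rfl
  push_cast
  rw [h1, h2]

lemma realBeta (a b : ℝ) (ha : 0 < a) (hb : 0 < b) :
    ∫ x in Set.Ioo (0:ℝ) 1, x ^ (a-1) * (1-x) ^ (b-1)
      = Real.Gamma a * Real.Gamma b / Real.Gamma (a+b) := by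
  have hG := Complex.Gamma_mul_Gamma_eq_betaIntegral (s := (a:ℂ)) (t := (b:ℂ))
    (by simpa using ha) (by simpa using hb)
  have hcoe : Complex.betaIntegral (a:ℂ) (b:ℂ)
      = ((∫ x in Set.Ioo (0:ℝ) 1, x ^ (a-1) * (1-x) ^ (b-1) : ℝ) : ℂ) := by
    rw [Complex.betaIntegral]
    rw [show (∫ x in (0:ℝ)..1, (x:ℂ) ^ ((a:ℂ) - 1) * (1 - (x:ℂ)) ^ ((b:ℂ) - 1))
        = ∫ x in (0:ℝ)..1, ((x ^ (a-1) * (1-x) ^ (b-1) : ℝ) : ℂ) from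
      intervalIntegral.integral_congr (fun x hx => by
        rw [Set.uIcc_of_le (by norm_num)] at hx
        exact (coe_beta_integrand a b x hx).symm)]
    rw [intervalIntegral.integral_ofReal]
    norm_cast
    rw [intervalIntegral.integral_of_le (by norm_num), MeasureTheory.integral_Ioc_eq_integral_Ioo]
  rw [hcoe, ← Complex.ofReal_add, Complex.Gamma_ofReal, Complex.Gamma_ofReal,
    Complex.Gamma_ofReal] at hG
  have hG' : Real.Gamma a * Real.Gamma b
      = Real.Gamma (a+b) * ∫ x in Set.Ioo (0:ℝ) 1, x ^ (a-1) * (1-x) ^ (b-1) := by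
    exact_mod_cast hG
  rw [hG']
  field_simp [Real.Gamma_pos_of_pos (by linarith : (0:ℝ) < a + b) |>.ne']

lemma realBeta_integrable (a b : ℝ) (ha : 0 < a) (hb : 0 < b) :
    IntegrableOn (fun x => x ^ (a-1) * (1-x) ^ (b-1)) (Set.Ioo (0:ℝ) 1) := by
  have h := (Complex.betaIntegral_convergent (u := (a:ℂ)) (v := (b:ℂ))
    (by simpa using ha) (by simpa using hb))
  have h2 : IntegrableOn (fun x : ℝ => (x:ℂ) ^ ((a:ℂ) - 1) * (1 - (x:ℂ)) ^ ((b:ℂ) - 1))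
      (Set.Ioo (0:ℝ) 1) := by
    have := (intervalIntegrable_iff_integrableOn_Ioc_of_le (by norm_num : (0:ℝ) ≤ 1)).mp h
    exact this.mono_set Set.Ioo_subset_Ioc_self
  have h3 : IntegrableOn
      (fun x : ℝ => ((x:ℂ) ^ ((a:ℂ) - 1) * (1 - (x:ℂ)) ^ ((b:ℂ) - 1)).re)
      (Set.Ioo (0:ℝ) 1) := h2.re
  exact h3.congr_fun (fun x hx => by
    beta_reduce
    rw [← coe_beta_integrand a b x (Set.Ioo_subset_Icc_self hx)]
    simp) measurableSet_Ioo

noncomputable def hfun (d : ℕ) : ℝ → ℝ :=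
  fun v => v ^ ((d : ℝ) - 1) / (1 + v ^ 2) ^ (((d : ℝ) + 1) / 2)

noncomputable def phi : ℝ → ℝ := fun v => v ^ 2 / (1 + v ^ 2)
noncomputable def phi' : ℝ → ℝ := fun v => 2 * v / (1 + v ^ 2) ^ 2
noncomputable def gbeta (d : ℕ) : ℝ → ℝ :=
  fun x => x ^ ((d : ℝ)/2 - 1) * (1 - x) ^ ((1:ℝ)/2 - 1)

lemma one_add_sq_pos (v : ℝ) : 0 < 1 + v ^ 2 := by positivity

lemma phi_hasDeriv (v : ℝ) : HasDerivAt phi (phi' v) v := by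
  have h1 : HasDerivAt (fun v : ℝ => v ^ 2) (2 * v) v := by
    simpa using hasDerivAt_pow 2 v
  have h2 : HasDerivAt (fun v : ℝ => 1 + v ^ 2) (2 * v) v := by
    exact h1.const_add 1
  have := h1.div h2 (one_add_sq_pos v).ne'
  refine this.congr_deriv ?_
  unfold phi'
  field_simp
  ring

lemma phi_inj : InjOn phi (Ioi 0) := by
  have : StrictMonoOn phi (Ioi 0) := by
    intro x hx y hy hxy
    simp only [phi, mem_Ioi] at *
    rw [div_lt_div_iff₀ (one_add_sq_pos x) (one_add_sq_pos y)]
    nlinarith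
  exact this.injOn

lemma phi_image : phi '' (Ioi 0) = Ioo 0 1 := by
  ext y
  constructor
  · rintro ⟨v, hv, rfl⟩
    simp only [mem_Ioi] at hv
    simp only [phi, mem_Ioo]
    constructor
    · exact div_pos (by positivity) (one_add_sq_pos v)
    · rw [div_lt_one (one_add_sq_pos v)]; nlinarith
  · rintro ⟨hy0, hy1⟩
    have h1y : (0:ℝ) < 1 - y := by linarith
    refine ⟨Real.sqrt (y / (1 - y)), ?_, ?_⟩
    · simp only [mem_Ioi]
      apply Real.sqrt_pos.mpr
      positivity
    · have ht : (0:ℝ) ≤ y / (1 - y) := by positivity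
      simp only [phi, Real.sq_sqrt ht]
      rw [show 1 + y / (1 - y) = 1 / (1 - y) by field_simp; ring]
      field_simp

lemma phi_pointwise (d : ℕ) {v : ℝ} (hv : 0 < v) :
    |phi' v| * gbeta d (phi v) = 2 * hfun d v := by
  have hA : (0:ℝ) < 1 + v ^ 2 := one_add_sq_pos v
  have e2 : 1 - phi v = 1 / (1 + v ^ 2) := by
    unfold phi; field_simp; ring
  have e1 : (phi v) ^ ((d : ℝ)/2 - 1) = v ^ ((d:ℝ) - 2) / (1 + v ^ 2) ^ ((d : ℝ)/2 - 1) := by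
    unfold phi
    rw [Real.div_rpow (sq_nonneg v) hA.le]
    congr 1
    rw [← Real.rpow_natCast v 2, ← Real.rpow_mul hv.le]
    congr 1
    ring
  have e3 : (1 / (1 + v ^ 2)) ^ ((1:ℝ)/2 - 1) = (1 + v ^ 2) ^ ((1:ℝ)/2) := by
    rw [show (1:ℝ)/2 - 1 = -(1/2) by norm_num, one_div, Real.inv_rpow hA.le,
      Real.rpow_neg hA.le, inv_inv]
  have habs : |phi' v| = 2 * v / (1 + v ^ 2) ^ 2 := by
    unfold phi'
    exact abs_of_pos (by positivity)
  have c1 : v * v ^ ((d:ℝ) - 2) = v ^ ((d:ℝ) - 1) := by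
    have h := Real.rpow_add hv 1 ((d:ℝ)-2)
    rw [Real.rpow_one] at h
    rw [← h]
    congr 1
    ring
  have c2 : ((1 + v ^ 2) ^ (2:ℕ) : ℝ) * (1 + v ^ 2) ^ (((d:ℝ)-2)/2)
      = (1 + v ^ 2) ^ (((d:ℝ)+2)/2) := by
    rw [← Real.rpow_natCast (1 + v^2) 2, ← Real.rpow_add hA]
    congr 1
    push_cast; ring
  have c3 : ((1 + v ^ 2) : ℝ) ^ ((1:ℝ)/2) * (1 + v ^ 2) ^ (((d:ℝ)+1)/2)
      = (1 + v ^ 2) ^ (((d:ℝ)+2)/2) := by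
    rw [← Real.rpow_add hA]
    congr 1
    ring
  rw [gbeta, e2, e1, e3, habs, hfun]
  have hAne : ∀ y : ℝ, (1 + v ^ 2) ^ (y:ℝ) ≠ 0 := fun y => (Real.rpow_pos_of_pos hA y).ne'
  field_simp
  rw [c2, ← c1, ← c3]
  ring

lemma hfun_integrable (d : ℕ) (hd : 2 ≤ d) : IntegrableOn (hfun d) (Ioi (0:ℝ)) := by
  have ha : (0:ℝ) < (d:ℝ)/2 := by positivity
  have hderivW : ∀ x ∈ Ioi (0:ℝ), HasDerivWithinAt phi (phi' x) (Ioi 0) x :=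
    fun x _ => (phi_hasDeriv x).hasDerivWithinAt
  have hiff := MeasureTheory.integrableOn_image_iff_integrableOn_abs_deriv_smul
    measurableSet_Ioi hderivW phi_inj (gbeta d)
  rw [phi_image] at hiff
  have hbeta : IntegrableOn (gbeta d) (Ioo (0:ℝ) 1) := by
    have := realBeta_integrable ((d:ℝ)/2) (1/2) ha one_half_pos
    exact this.congr_fun (fun x _ => rfl) measurableSet_Ioo
  have h2 : IntegrableOn (fun x => |phi' x| • gbeta d (phi x)) (Ioi (0:ℝ)) := hiff.mp hbeta
  have h3 : IntegrableOn (fun v => 2 * hfun d v) (Ioi (0:ℝ)) :=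
    h2.congr_fun (fun v hv => by
      simpa [smul_eq_mul] using phi_pointwise d (mem_Ioi.mp hv)) measurableSet_Ioi
  have h4 : IntegrableOn (fun x => 1/2 * (2 * hfun d x)) (Ioi (0:ℝ)) :=
    h3.const_mul (1/2 : ℝ)
  exact h4.congr_fun (fun v _ => by ring) measurableSet_Ioi

lemma hfun_integral (d : ℕ) (hd : 2 ≤ d) :
    ∫ v in Ioi (0:ℝ), hfun d v
      = Real.sqrt π * Real.Gamma ((d:ℝ)/2) / (2 * Real.Gamma (((d:ℝ)+1)/2)) := by
  have ha : (0:ℝ) < (d:ℝ)/2 := by positivity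
  have hderivW : ∀ x ∈ Ioi (0:ℝ), HasDerivWithinAt phi (phi' x) (Ioi 0) x :=
    fun x _ => (phi_hasDeriv x).hasDerivWithinAt
  have hcov := MeasureTheory.integral_image_eq_integral_abs_deriv_smul
    measurableSet_Ioi hderivW phi_inj (gbeta d)
  rw [phi_image] at hcov
  have hlhs : ∫ x in Ioo (0:ℝ) 1, gbeta d x
      = Real.Gamma ((d:ℝ)/2) * Real.sqrt π / Real.Gamma (((d:ℝ)+1)/2) := by
    have := realBeta ((d:ℝ)/2) (1/2) ha one_half_pos
    rw [show (d:ℝ)/2 + 1/2 = ((d:ℝ)+1)/2 by ring, Real.Gamma_one_half_eq] at this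
    rw [show ∫ x in Ioo (0:ℝ) 1, gbeta d x
        = ∫ x in Ioo (0:ℝ) 1, x ^ ((d:ℝ)/2 - 1) * (1-x) ^ ((1:ℝ)/2 - 1) from rfl, this]
  have hrhs : ∫ x in Ioi (0:ℝ), |phi' x| • gbeta d (phi x)
      = 2 * ∫ v in Ioi (0:ℝ), hfun d v := by
    rw [MeasureTheory.setIntegral_congr_fun measurableSet_Ioi
      (fun v hv => by simpa [smul_eq_mul] using phi_pointwise d (mem_Ioi.mp hv))]
    exact MeasureTheory.integral_const_mul 2 _
  rw [hlhs, hrhs] at hcov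
  have hGne : Real.Gamma (((d:ℝ)+1)/2) ≠ 0 :=
    (Real.Gamma_pos_of_pos (by positivity)).ne'
  field_simp at hcov ⊢
  linarith

lemma cesaro_integral {g : ℝ → ℝ} {L : ℝ}
    (hint : ∀ r : ℝ, 0 ≤ r → IntervalIntegrable g volume 0 r)
    (hg : Tendsto g atTop (nhds L)) :
    Tendsto (fun r => (∫ u in (0:ℝ)..r, g u) / r) atTop (nhds L) := by
  rw [Metric.tendsto_atTop]
  intro ε hε
  obtain ⟨R₀, hR₀⟩ := (Metric.tendsto_atTop.mp hg (ε/3) (by positivity))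
  set R : ℝ := max R₀ 0 with hR
  have hR0 : 0 ≤ R := le_max_right _ _
  set C : ℝ := |(∫ u in (0:ℝ)..R, g u) - R * L| with hC
  have hC0 : 0 ≤ C := abs_nonneg _
  refine ⟨max R (max 1 (3*C/ε)), fun r hr => ?_⟩
  have hrR : R ≤ r := le_trans (le_max_left _ _) hr
  have hr1 : (1:ℝ) ≤ r := le_trans (le_trans (le_max_left _ _) (le_max_right _ _)) hr
  have hr0 : 0 < r := lt_of_lt_of_le one_pos hr1
  have hrC : 3*C/ε ≤ r := le_trans (le_trans (le_max_right _ _) (le_max_right _ _)) hr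
  have hint0R : IntervalIntegrable g volume 0 R := hint R hR0
  have hintRr : IntervalIntegrable g volume R r :=
    ((hint R hR0).symm.trans (hint r (le_of_lt hr0)))
  have hsplit : (∫ u in (0:ℝ)..r, g u)
      = (∫ u in (0:ℝ)..R, g u) + ∫ u in R..r, g u :=
    (intervalIntegral.integral_add_adjacent_intervals hint0R hintRr).symm
  have hbound : |(∫ u in R..r, g u) - (r - R) * L| ≤ ε/3 * (r - R) := by
    have hsub : (∫ u in R..r, g u) - (r - R) * L = ∫ u in R..r, (g u - L) := by
      rw [intervalIntegral.integral_sub hintRr (intervalIntegrable_const)]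
      simp [intervalIntegral.integral_const, smul_eq_mul]
    rw [hsub]
    have := intervalIntegral.norm_integral_le_of_norm_le_const
      (C := ε/3) (f := fun u => g u - L) (a := R) (b := r) (fun x hx => by
        rw [Set.uIoc_of_le hrR] at hx
        have hx1 : R₀ ≤ x := le_trans (le_max_left _ _) (le_of_lt hx.1)
        have := hR₀ x hx1
        rw [Real.dist_eq] at this
        simpa [Real.norm_eq_abs] using le_of_lt this)
    rw [Real.norm_eq_abs, abs_of_nonneg (by linarith : (0:ℝ) ≤ r - R)] at this
    exact this
  have key : |(∫ u in (0:ℝ)..r, g u) - r * L| ≤ C + ε/3 * r := by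
    have : (∫ u in (0:ℝ)..r, g u) - r * L
        = ((∫ u in (0:ℝ)..R, g u) - R * L) + ((∫ u in R..r, g u) - (r - R) * L) := by
      rw [hsplit]; ring
    rw [this]
    calc |_ + _| ≤ C + |(∫ u in R..r, g u) - (r - R) * L| := abs_add_le _ _
    _ ≤ C + ε/3 * (r - R) := by linarith
    _ ≤ C + ε/3 * r := by nlinarith
  rw [Real.dist_eq]
  have heq : (∫ u in (0:ℝ)..r, g u) / r - L = ((∫ u in (0:ℝ)..r, g u) - r * L) / r := by
    field_simp
  rw [heq, abs_div, abs_of_pos hr0]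
  have hCr : C ≤ ε/3 * r := by
    rw [div_le_iff₀ hε] at hrC
    nlinarith
  refine lt_of_le_of_lt ?_ (show 2*ε/3 < ε by linarith)
  calc |(∫ u in (0:ℝ)..r, g u) - r * L| / r ≤ (C + ε/3 * r) / r := by gcongr
  _ ≤ 2*ε/3 := by
        rw [div_le_iff₀ hr0]; nlinarith

noncomputable def Wfun (d : ℕ) : ℝ → ℝ :=
  fun u => (u ^ 2 / (1 + u ^ 2)) ^ (-(((d : ℝ) - 1) / 2))
noncomputable def Ffun (d : ℕ) : ℝ → ℝ := fun u => ∫ v in (0:ℝ)..u, hfun d v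
noncomputable def gfun (d : ℕ) : ℝ → ℝ := fun u => Wfun d u * Ffun d u

lemma hd1 (d : ℕ) (hd : 2 ≤ d) : (1:ℝ) ≤ (d:ℝ) - 1 := by
  have : (2:ℝ) ≤ (d:ℝ) := by exact_mod_cast hd
  linarith

lemma rpow_cont (d : ℕ) (hd : 2 ≤ d) : Continuous (fun v : ℝ => v ^ ((d:ℝ) - 1)) := by
  rw [continuous_iff_continuousAt]
  intro v
  exact Real.continuousAt_rpow_const v _ (Or.inr (by linarith [hd1 d hd]))

lemma hfun_cont (d : ℕ) (hd : 2 ≤ d) : Continuous (hfun d) := by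
  apply Continuous.div (rpow_cont d hd)
  · rw [continuous_iff_continuousAt]
    intro v
    exact ContinuousAt.rpow_const (by fun_prop) (Or.inl (one_add_sq_pos v).ne')
  · exact fun v => (Real.rpow_pos_of_pos (one_add_sq_pos v) _).ne'

lemma hfun_nonneg (d : ℕ) (v : ℝ) (hv : 0 ≤ v) : 0 ≤ hfun d v :=
  div_nonneg (Real.rpow_nonneg hv _) (Real.rpow_nonneg (one_add_sq_pos v).le _)

lemma Ffun_cont (d : ℕ) (hd : 2 ≤ d) : Continuous (Ffun d) :=
  intervalIntegral.continuous_primitive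
    (fun a b => (hfun_cont d hd).intervalIntegrable a b) 0

lemma Ffun_nonneg (d : ℕ) (u : ℝ) (hu : 0 ≤ u) : 0 ≤ Ffun d u :=
  intervalIntegral.integral_nonneg hu (fun v hv => hfun_nonneg d v hv.1)

lemma Ffun_le (d : ℕ) (hd : 2 ≤ d) (u : ℝ) (hu : 0 ≤ u) : Ffun d u ≤ u ^ ((d:ℝ)) / d := by
  have hdr : (0:ℝ) < (d:ℝ) := by
    have := hd1 d hd; linarith
  have hle : Ffun d u ≤ ∫ v in (0:ℝ)..u, v ^ ((d:ℝ) - 1) := by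
    apply intervalIntegral.integral_mono_on hu
      ((hfun_cont d hd).intervalIntegrable _ _) ((rpow_cont d hd).intervalIntegrable _ _)
    intro x hx
    apply div_le_self (Real.rpow_nonneg hx.1 _)
    calc (1:ℝ) = 1 ^ (((d:ℝ) + 1)/2) := (Real.one_rpow _).symm
    _ ≤ (1 + x ^ 2) ^ (((d:ℝ) + 1)/2) :=
        Real.rpow_le_rpow zero_le_one (by nlinarith) (by positivity)
  have heq : ∫ v in (0:ℝ)..u, v ^ ((d:ℝ) - 1) = u ^ ((d:ℝ)) / d := by
    rw [integral_rpow (Or.inl (by linarith [hd1 d hd] : (-1:ℝ) < (d:ℝ) - 1))]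
    rw [show (d:ℝ) - 1 + 1 = (d:ℝ) by ring, Real.zero_rpow hdr.ne']
    ring
  linarith

lemma Wfun_nonneg (d : ℕ) (u : ℝ) : 0 ≤ Wfun d u :=
  Real.rpow_nonneg (div_nonneg (sq_nonneg u) (one_add_sq_pos u).le) _

lemma Wfun_eq (d : ℕ) (u : ℝ) (hu : 0 < u) :
    Wfun d u = (1 + u ^ 2) ^ (((d:ℝ) - 1)/2) / u ^ ((d:ℝ) - 1) := by
  have key : ((u ^ 2 : ℝ)) ^ (((d:ℝ) - 1)/2) = u ^ ((d:ℝ) - 1) := by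
    rw [← Real.rpow_natCast u 2, ← Real.rpow_mul hu.le]
    congr 1
    push_cast; ring
  unfold Wfun
  rw [Real.rpow_neg (div_nonneg (sq_nonneg u) (one_add_sq_pos u).le),
    Real.div_rpow (sq_nonneg u) (one_add_sq_pos u).le, key, inv_div]

lemma gfun_nonneg (d : ℕ) (u : ℝ) (hu : 0 ≤ u) : 0 ≤ gfun d u :=
  mul_nonneg (Wfun_nonneg d u) (Ffun_nonneg d u hu)

lemma gfun_le (d : ℕ) (hd : 2 ≤ d) (u : ℝ) (hu : 0 < u) :
    gfun d u ≤ (1 + u ^ 2) ^ (((d:ℝ) - 1)/2) * u / d := by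
  have hud : u ^ ((d:ℝ)) = u * u ^ ((d:ℝ) - 1) := by
    have h := Real.rpow_add hu 1 ((d:ℝ) - 1)
    rw [Real.rpow_one, show (1:ℝ) + ((d:ℝ) - 1) = (d:ℝ) by ring] at h
    exact h
  have hne : u ^ ((d:ℝ) - 1) ≠ 0 := (Real.rpow_pos_of_pos hu _).ne'
  calc gfun d u ≤ Wfun d u * (u ^ ((d:ℝ)) / d) :=
        mul_le_mul_of_nonneg_left (Ffun_le d hd u hu.le) (Wfun_nonneg d u)
  _ = (1 + u ^ 2) ^ (((d:ℝ) - 1)/2) * u / d := by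
      rw [Wfun_eq d u hu, hud]
      field_simp

lemma gfun_contOn (d : ℕ) (hd : 2 ≤ d) : ContinuousOn (gfun d) (Ioi 0) := by
  apply ContinuousOn.mul
  · intro u hu
    apply ContinuousAt.continuousWithinAt
    apply ContinuousAt.rpow_const (by fun_prop (disch := positivity))
    left
    have : (0:ℝ) < u ^ 2 / (1 + u ^ 2) :=
      div_pos (pow_pos (mem_Ioi.mp hu) 2) (one_add_sq_pos u)
    exact this.ne'
  · exact (Ffun_cont d hd).continuousOn

lemma gfun_intInt (d : ℕ) (hd : 2 ≤ d) (r : ℝ) (hr : 0 ≤ r) : IntervalIntegrable (gfun d) volume 0 r := by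
  rw [intervalIntegrable_iff_integrableOn_Ioc_of_le hr]
  apply Integrable.mono' (g := fun _ => (1 + r ^ 2) ^ (((d:ℝ) - 1)/2) * r / d)
  · exact integrableOn_const measure_Ioc_lt_top.ne
  · exact ((gfun_contOn d hd).mono Ioc_subset_Ioi_self).aestronglyMeasurable measurableSet_Ioc
  · filter_upwards [ae_restrict_mem measurableSet_Ioc] with u hu
    rw [Real.norm_eq_abs, abs_of_nonneg (gfun_nonneg d u hu.1.le)]
    calc gfun d u ≤ (1 + u ^ 2) ^ (((d:ℝ) - 1)/2) * u / d := gfun_le d hd u hu.1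
    _ ≤ (1 + r ^ 2) ^ (((d:ℝ) - 1)/2) * r / d := by
        have h1 : (1 + u ^ 2) ^ (((d:ℝ) - 1)/2) ≤ (1 + r ^ 2) ^ (((d:ℝ) - 1)/2) :=
          Real.rpow_le_rpow (one_add_sq_pos u).le (by nlinarith [hu.1.le, hu.2]) (by have := hd1 d hd; linarith)
        have h2 : (0:ℝ) < d := by have := hd1 d hd; linarith
        have h3 := mul_le_mul h1 hu.2 hu.1.le (Real.rpow_nonneg (one_add_sq_pos r).le _)
        exact by gcongr


lemma gfun_tendsto (d : ℕ) (hd : 2 ≤ d) :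
    Tendsto (gfun d) atTop (nhds (∫ v in Ioi (0:ℝ), hfun d v)) := by
  have hFlim : Tendsto (Ffun d) atTop (nhds (∫ v in Ioi (0:ℝ), hfun d v)) :=
    MeasureTheory.intervalIntegral_tendsto_integral_Ioi 0 (hfun_integrable d hd) tendsto_id
  have h0 : Tendsto (fun u : ℝ => (1 + u ^ 2)⁻¹) atTop (nhds 0) := by
    apply Filter.Tendsto.inv_tendsto_atTop
    exact tendsto_atTop_add_const_left _ 1 (tendsto_pow_atTop two_ne_zero)
  have hphi : Tendsto (fun u : ℝ => u ^ 2 / (1 + u ^ 2)) atTop (nhds 1) := by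
    have h1 := (tendsto_const_nhds (x := (1:ℝ)) (f := atTop)).sub h0
    rw [sub_zero] at h1
    apply Tendsto.congr ?_ h1
    intro u
    have := (one_add_sq_pos u).ne'
    field_simp
    ring
  have hWlim : Tendsto (fun u => Wfun d u) atTop (nhds 1) := by
    have hcont1 : ContinuousAt (fun x : ℝ => x ^ (-(((d:ℝ) - 1) / 2))) 1 :=
      Real.continuousAt_rpow_const 1 _ (Or.inl one_ne_zero)
    have h2 := hcont1.tendsto.comp hphi
    rw [Real.one_rpow] at h2
    exact h2
  have := hWlim.mul hFlim
  rw [one_mul] at this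
  exact this

/-- The function `f₀` satisfies `f₀(0+) = 0` and `f₀(r)/r → 1` as `r → ∞`. -/
theorem stmt2 (d : ℕ) (hd : 2 ≤ d) (γ : ℝ)
    (hγ : γ = (1 / Real.sqrt π) * (Real.Gamma (((d : ℝ) + 1) / 2) / Real.Gamma ((d : ℝ) / 2)))
    (f₀ : ℝ → ℝ)
    (hf : ∀ r : ℝ, f₀ r = 2 * γ * ∫ u in (0:ℝ)..r,
      (u ^ 2 / (1 + u ^ 2)) ^ (-(((d : ℝ) - 1) / 2)) *
        ∫ v in (0:ℝ)..u, v ^ ((d : ℝ) - 1) / (1 + v ^ 2) ^ (((d : ℝ) + 1) / 2)) :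
    Tendsto f₀ (nhdsWithin 0 (Set.Ioi 0)) (nhds 0) ∧
      Tendsto (fun r => f₀ r / r) atTop (nhds 1) := by
  have hf' : ∀ r : ℝ, f₀ r = 2 * γ * ∫ u in (0:ℝ)..r, gfun d u := fun r => by
    rw [hf r]; rfl
  have hsπ : (0:ℝ) < Real.sqrt π := Real.sqrt_pos.mpr Real.pi_pos
  have hG1 : (0:ℝ) < Real.Gamma (((d:ℝ) + 1)/2) := Real.Gamma_pos_of_pos (by positivity)
  have hG2 : (0:ℝ) < Real.Gamma ((d:ℝ)/2) := by
    apply Real.Gamma_pos_of_pos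
    have := hd1 d hd; linarith
  have hγpos : 0 < γ := by
    rw [hγ]; positivity
  set L : ℝ := ∫ v in Ioi (0:ℝ), hfun d v with hL
  have hLval : L = Real.sqrt π * Real.Gamma ((d:ℝ)/2) / (2 * Real.Gamma (((d:ℝ)+1)/2)) :=
    hfun_integral d hd
  have h2γL : 2 * γ * L = 1 := by
    rw [hLval, hγ]
    field_simp
  constructor
  · -- f₀ → 0 at 0+
    set C : ℝ := 2 ^ (((d:ℝ) - 1)/2) with hC
    have hgb : ∀ u : ℝ, 0 < u → u ≤ 1 → gfun d u ≤ C := by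
      intro u hu hu1
      calc gfun d u ≤ (1 + u ^ 2) ^ (((d:ℝ) - 1)/2) * u / d := gfun_le d hd u hu
      _ ≤ 2 ^ (((d:ℝ) - 1)/2) * 1 / 1 := by
          apply div_le_div₀ (by positivity)
          · apply mul_le_mul ?_ hu1 hu.le (by positivity)
            exact Real.rpow_le_rpow (one_add_sq_pos u).le (by nlinarith)
              (by have := hd1 d hd; linarith)
          · norm_num
          · have := hd1 d hd
            exact_mod_cast (by linarith : (1:ℝ) ≤ (d:ℝ))
      _ = C := by norm_num [hC]
    apply squeeze_zero'
    · filter_upwards [self_mem_nhdsWithin] with r hr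
      rw [hf' r]
      apply mul_nonneg (by positivity)
      exact intervalIntegral.integral_nonneg (le_of_lt hr) (fun u hu => gfun_nonneg d u hu.1)
    · show ∀ᶠ r in _, f₀ r ≤ 2 * γ * C * r
      filter_upwards [Ioc_mem_nhdsGT_of_mem (Set.mem_Ico.mpr ⟨le_refl 0, zero_lt_one⟩)]
        with r hr
      rw [hf' r]
      have hb : |∫ u in (0:ℝ)..r, gfun d u| ≤ C * r := by
        have := intervalIntegral.norm_integral_le_of_norm_le_const (C := C)
          (f := gfun d) (a := 0) (b := r) (fun x hx => by
            rw [Set.uIoc_of_le hr.1.le] at hx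
            rw [Real.norm_eq_abs, abs_of_nonneg (gfun_nonneg d x hx.1.le)]
            exact hgb x hx.1 (le_trans hx.2 hr.2))
        rw [Real.norm_eq_abs, sub_zero, abs_of_pos hr.1] at this
        exact this
      calc 2 * γ * ∫ u in (0:ℝ)..r, gfun d u ≤ 2 * γ * (C * r) := by
            apply mul_le_mul_of_nonneg_left ?_ (by positivity)
            exact le_trans (le_abs_self _) hb
      _ = 2 * γ * C * r := by ring
    · have h1 : Tendsto (fun r : ℝ => 2 * γ * C * r) (nhds 0) (nhds 0) := by
        have hcn : Continuous (fun r : ℝ => 2 * γ * C * r) := by fun_prop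
        simpa using hcn.tendsto 0
      exact h1.mono_left nhdsWithin_le_nhds
  · -- f₀ r / r → 1
    have hces := cesaro_integral (gfun_intInt d hd) (gfun_tendsto d hd)
    have h2 : Tendsto (fun r => 2 * γ * ((∫ u in (0:ℝ)..r, gfun d u) / r)) atTop
        (nhds (2 * γ * L)) := tendsto_const_nhds.mul hces
    rw [h2γL] at h2
    apply h2.congr
    intro r
    rw [hf' r]
    ring
end

section
/- If f is a C² function on (0,∞) and l ≥ 1 an integer, and one sets y(x) for x < 0 by f(r) = r^l y(−r²), then f satisfies (1/2)(1+r²) f'' + ((d−1)/(2r)) f' − (l(l+d−2)/(2r²)) f = 0 if and only if y satisfies the hypergeometric equation x(1−x) y'' + (l + d/2 − x(l + 1/2)) y' − (l(l−1)/4) y = 0 on the negative half-line. -/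
theorem aux_key (d l : ℕ) (hd : 2 ≤ d) (hl : 1 ≤ l)
    (f y : ℝ → ℝ)
    (hf : ContDiffOn ℝ 2 f (Set.Ioi 0)) (hy : ContDiffOn ℝ 2 y (Set.Iio 0))
    (hfy : ∀ r : ℝ, 0 < r → f r = r ^ l * y (-(r ^ 2))) (r : ℝ) (hr : 0 < r) :
    (1 / 2) * (1 + r ^ 2) * deriv (deriv f) r + (((d : ℝ) - 1) / (2 * r)) * deriv f r
      - ((l : ℝ) * ((l : ℝ) + (d : ℝ) - 2) / (2 * r ^ 2)) * f r
    = (-2 * r ^ l) * ((-(r ^ 2)) * (1 - (-(r ^ 2))) * deriv (deriv y) (-(r ^ 2))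
        + ((l : ℝ) + (d : ℝ) / 2 - (-(r ^ 2)) * ((l : ℝ) + 1 / 2)) * deriv y (-(r ^ 2))
        - ((l : ℝ) * ((l : ℝ) - 1) / 4) * y (-(r ^ 2))) := by
  have hy' : ContDiffOn ℝ (1 + 1) y (Set.Iio 0) := by norm_num; exact hy
  have hy2 := (contDiffOn_succ_iff_deriv_of_isOpen (isOpen_Iio (a := (0:ℝ)))).mp hy'
  have hyd : ∀ x : ℝ, x < 0 → DifferentiableAt ℝ y x := fun x hx =>
    hy2.1.differentiableAt (Iio_mem_nhds hx)
  have hyd' : ∀ x : ℝ, x < 0 → DifferentiableAt ℝ (deriv y) x := fun x hx =>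
    (hy2.2.2.differentiableOn one_ne_zero).differentiableAt (Iio_mem_nhds hx)
  -- inner derivative
  have hinner : ∀ s : ℝ, HasDerivAt (fun t : ℝ => -(t ^ 2)) (-(2 * s)) s := by
    intro s
    have := (hasDerivAt_pow 2 s).fun_neg
    simpa using this
  have hneg : ∀ s : ℝ, 0 < s → -(s ^ 2) < 0 := fun s hs => neg_lt_zero.mpr (by positivity)
  -- first derivative of f
  have h1 : ∀ s : ℝ, 0 < s → deriv f s
      = (l : ℝ) * s ^ (l - 1) * y (-(s ^ 2)) - 2 * s ^ (l + 1) * deriv y (-(s ^ 2)) := by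
    intro s hs
    have hyc : HasDerivAt (fun t : ℝ => y (-(t ^ 2)))
        (deriv y (-(s ^ 2)) * (-(2 * s))) s :=
      ((hyd _ (hneg s hs)).hasDerivAt).comp s (hinner s)
    have hprod : HasDerivAt (fun t : ℝ => t ^ l * y (-(t ^ 2)))
        ((l : ℝ) * s ^ (l - 1) * y (-(s ^ 2)) + s ^ l * (deriv y (-(s ^ 2)) * (-(2 * s)))) s :=
      (hasDerivAt_pow l s).mul hyc
    have hev : f =ᶠ[nhds s] fun t => t ^ l * y (-(t ^ 2)) :=
      Filter.eventuallyEq_of_mem (Ioi_mem_nhds hs) (fun t ht => hfy t ht)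
    have := (hprod.congr_of_eventuallyEq hev).deriv
    rw [this, pow_succ]
    ring
  -- second derivative of f
  have h2 : deriv (deriv f) r
      = (l : ℝ) * ((l - 1 : ℕ) * r ^ (l - 1 - 1) * y (-(r ^ 2))
          + r ^ (l - 1) * (deriv y (-(r ^ 2)) * (-(2 * r))))
        - 2 * (((l + 1 : ℕ) : ℝ) * r ^ l * deriv y (-(r ^ 2))
          + r ^ (l + 1) * (deriv (deriv y) (-(r ^ 2)) * (-(2 * r)))) := by
    have hyc : HasDerivAt (fun t : ℝ => y (-(t ^ 2)))
        (deriv y (-(r ^ 2)) * (-(2 * r))) r :=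
      ((hyd _ (hneg r hr)).hasDerivAt).comp r (hinner r)
    have hyc' : HasDerivAt (fun t : ℝ => deriv y (-(t ^ 2)))
        (deriv (deriv y) (-(r ^ 2)) * (-(2 * r))) r :=
      ((hyd' _ (hneg r hr)).hasDerivAt).comp (h₂ := deriv y) r (hinner r)
    have t1 : HasDerivAt (fun t : ℝ => (l : ℝ) * (t ^ (l - 1) * y (-(t ^ 2))))
        ((l : ℝ) * ((l - 1 : ℕ) * r ^ (l - 1 - 1) * y (-(r ^ 2))
          + r ^ (l - 1) * (deriv y (-(r ^ 2)) * (-(2 * r))))) r :=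
      ((hasDerivAt_pow (l - 1) r).mul hyc).const_mul (l : ℝ)
    have t2 : HasDerivAt (fun t : ℝ => 2 * (t ^ (l + 1) * deriv y (-(t ^ 2))))
        (2 * (((l + 1 : ℕ) : ℝ) * r ^ l * deriv y (-(r ^ 2))
          + r ^ (l + 1) * (deriv (deriv y) (-(r ^ 2)) * (-(2 * r))))) r := by
      have := ((hasDerivAt_pow (l + 1) r).mul hyc').const_mul (2 : ℝ)
      simpa using this
    have hsum := t1.sub t2
    have hev : deriv f =ᶠ[nhds r]
        (fun t : ℝ => (l : ℝ) * (t ^ (l - 1) * y (-(t ^ 2)))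
          - 2 * (t ^ (l + 1) * deriv y (-(t ^ 2)))) :=
      Filter.eventuallyEq_of_mem (Ioi_mem_nhds hr) (fun t ht => by
        rw [h1 t ht]; ring)
    exact (hsum.congr_of_eventuallyEq hev).deriv
  rw [h2, h1 r hr, hfy r hr]
  obtain ⟨k, rfl⟩ : ∃ k, l = k + 1 := ⟨l - 1, (Nat.succ_pred_eq_of_pos hl).symm⟩
  have hr0 : r ≠ 0 := ne_of_gt hr
  rcases k with _ | m
  · norm_num
    field_simp
    ring
  · simp only [Nat.add_sub_cancel]
    push_cast
    field_simp
    ring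

/-- The substitution `f(r) = r^l y(−r²)` transforms the radial ODE into the
hypergeometric equation with parameters `a = l/2`, `b = (l−1)/2`, `c = l + d/2`. -/
theorem stmt3 (d l : ℕ) (hd : 2 ≤ d) (hl : 1 ≤ l)
    (f y : ℝ → ℝ)
    (hf : ContDiffOn ℝ 2 f (Set.Ioi 0)) (hy : ContDiffOn ℝ 2 y (Set.Iio 0))
    (hfy : ∀ r : ℝ, 0 < r → f r = r ^ l * y (-(r ^ 2))) :
    (∀ r : ℝ, 0 < r →
        (1 / 2) * (1 + r ^ 2) * deriv (deriv f) r + (((d : ℝ) - 1) / (2 * r)) * deriv f r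
          - ((l : ℝ) * ((l : ℝ) + (d : ℝ) - 2) / (2 * r ^ 2)) * f r = 0)
      ↔ (∀ x : ℝ, x < 0 →
        x * (1 - x) * deriv (deriv y) x
          + ((l : ℝ) + (d : ℝ) / 2 - x * ((l : ℝ) + 1 / 2)) * deriv y x
          - ((l : ℝ) * ((l : ℝ) - 1) / 4) * y x = 0) := by
  constructor
  · intro h x hx
    set r := Real.sqrt (-x) with hrdef
    have hr : 0 < r := Real.sqrt_pos.mpr (by linarith)
    have hx' : -(r ^ 2) = x := by
      rw [hrdef, Real.sq_sqrt (by linarith)]; ring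
    have hkey := aux_key d l hd hl f y hf hy hfy r hr
    rw [h r hr] at hkey
    have hne : (-2 * r ^ l : ℝ) ≠ 0 := mul_ne_zero (by norm_num) (pow_ne_zero _ hr.ne')
    have := (mul_eq_zero.mp hkey.symm).resolve_left hne
    rwa [hx'] at this
  · intro h r hr
    have hkey := aux_key d l hd hl f y hf hy hfy r hr
    rw [hkey, h (-(r ^ 2)) (neg_lt_zero.mpr (by positivity)), mul_zero]
end

section
/- If u : ℝ^d → ℝ is a convex function such that for some continuous g : S^{d−1} → ℝ, u(rθ)/r → g(θ) as r → ∞ for every θ ∈ S^{d−1}, then the function v(x) = |x| g(x/|x|) (with v(0) = 0) is convex on ℝ^d. -/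
open Filter

/-- If `u` is convex on `ℝ^d` and `u(rθ)/r → g(θ)` for every unit vector `θ`,
then `v(x) = |x| g(x/|x|)` (with `v 0 = 0`) is convex. -/
theorem stmt10 (d : ℕ) (hd : 2 ≤ d)
    (u : EuclideanSpace ℝ (Fin d) → ℝ) (hu : ConvexOn ℝ Set.univ u)
    (g : EuclideanSpace ℝ (Fin d) → ℝ)
    (hg : ContinuousOn g (Metric.sphere (0 : EuclideanSpace ℝ (Fin d)) 1))
    (hlim : ∀ θ : EuclideanSpace ℝ (Fin d), ‖θ‖ = 1 →
      Tendsto (fun r : ℝ => u (r • θ) / r) atTop (nhds (g θ)))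
    (v : EuclideanSpace ℝ (Fin d) → ℝ) (hv0 : v 0 = 0)
    (hv : ∀ x : EuclideanSpace ℝ (Fin d), x ≠ 0 → v x = ‖x‖ * g (‖x‖⁻¹ • x)) :
    ConvexOn ℝ Set.univ v := by
  have htend : ∀ x, Tendsto (fun r : ℝ => u (r • x) / r) atTop (nhds (v x)) := by
    intro x
    rcases eq_or_ne x 0 with rfl | hx
    · rw [hv0]
      simpa using
        (tendsto_const_nhds : Tendsto (fun _ : ℝ => u 0) atTop _).div_atTop tendsto_id
    · have hnx : 0 < ‖x‖ := norm_pos_iff.mpr hx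
      set θ := ‖x‖⁻¹ • x with hθdef
      have hθ : ‖θ‖ = 1 := by
        rw [hθdef, norm_smul, norm_inv, norm_norm, inv_mul_cancel₀ hnx.ne']
      have h1 : Tendsto (fun r : ℝ => r * ‖x‖) atTop atTop :=
        Tendsto.atTop_mul_const hnx tendsto_id
      have h2 : Tendsto (fun r : ℝ => u ((r * ‖x‖) • θ) / (r * ‖x‖)) atTop (nhds (g θ)) :=
        (hlim θ hθ).comp h1
      have h3 : Tendsto (fun r : ℝ => ‖x‖ * (u ((r * ‖x‖) • θ) / (r * ‖x‖))) atTop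
          (nhds (‖x‖ * g θ)) := h2.const_mul _
      rw [hv x hx, ← hθdef]
      refine h3.congr' ?_
      filter_upwards [eventually_gt_atTop (0 : ℝ)] with r hr
      have hs : (r * ‖x‖) • θ = r • x := by
        rw [hθdef, smul_smul, mul_assoc, mul_inv_cancel₀ hnx.ne', mul_one]
      rw [hs]
      field_simp
  refine ⟨convex_univ, fun x _ y _ a b ha hb hab => ?_⟩
  have hA := htend (a • x + b • y)
  have hB := ((htend x).const_mul a).add ((htend y).const_mul b)
  refine le_of_tendsto_of_tendsto hA hB ?_
  filter_upwards [eventually_gt_atTop (0 : ℝ)] with r hr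
  have key := hu.2 (Set.mem_univ (r • x)) (Set.mem_univ (r • y)) ha hb hab
  have hsmul : r • (a • x + b • y) = a • (r • x) + b • (r • y) := by
    simp [smul_add, smul_smul, mul_comm]
  show u (r • (a • x + b • y)) / r ≤ a * (u (r • x) / r) + b * (u (r • y) / r)
  rw [hsmul]
  calc u (a • (r • x) + b • (r • y)) / r ≤ (a * u (r • x) + b * u (r • y)) / r :=
        div_le_div_of_nonneg_right key hr.le |>.trans_eq rfl
    _ = a * (u (r • x) / r) + b * (u (r • y) / r) := by rw [add_div, mul_div_assoc, mul_div_assoc]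
end

section
/- For every l ≥ 1 and d ≥ 2, the function f_l(r) = r^l · (Γ((l+d+1)/2)Γ(l/2)/(Γ(l+d/2)Γ(1/2))) · ₂F₁(l/2, (l−1)/2; l+d/2; −r²) satisfies lim_{r→∞} f_l(r)/r = 1. -/
open MeasureTheory Filter

/-- The Gauss hypergeometric function `₂F₁(a,b;c;x)`, defined for `b ≥ 0`, `c > b`
and `x ≤ 0` by Euler's integral representation
`₂F₁(a,b;c;x) = Γ(c)/(Γ(b)Γ(c-b)) ∫₀¹ t^(b-1)(1-t)^(c-b-1)(1-xt)^(-a) dt`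
(equal to `1` when `b = 0`). -/
noncomputable def Gauss2F1 (a b c x : ℝ) : ℝ :=
  if b = 0 then 1 else
    (Real.Gamma c / (Real.Gamma b * Real.Gamma (c - b))) *
      ∫ t in (0:ℝ)..1, t ^ (b - 1) * (1 - t) ^ (c - b - 1) * (1 - x * t) ^ (-a)

open Set Topology

section Aux


lemma realBetaAe {u v : ℝ} :
    (fun x : ℝ => ((x:ℂ)) ^ ((u:ℂ)-1) * ((1:ℂ)-(x:ℂ)) ^ ((v:ℂ)-1))
      =ᵐ[volume.restrict (Ioo (0:ℝ) 1)]
    (fun x : ℝ => ((x ^ (u-1) * (1-x) ^ (v-1) : ℝ) : ℂ)) := by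
  filter_upwards [ae_restrict_mem measurableSet_Ioo] with x hx
  have h1 : (0:ℝ) ≤ x := hx.1.le
  have h2 : (0:ℝ) ≤ 1 - x := by linarith [hx.2]
  push_cast
  rw [Complex.ofReal_cpow h1, Complex.ofReal_cpow h2]
  push_cast
  ring

lemma realBetaIntegrable {u v : ℝ} (hu : 0 < u) (hv : 0 < v) :
    IntegrableOn (fun x : ℝ => x ^ (u-1) * (1-x) ^ (v-1)) (Ioo 0 1) := by
  have h := (Complex.betaIntegral_convergent (u := (u:ℂ)) (v := (v:ℂ))
    (by simpa using hu) (by simpa using hv))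
  rw [intervalIntegrable_iff_integrableOn_Ioc_of_le zero_le_one] at h
  have h2 := (h.mono_set Ioo_subset_Ioc_self).congr realBetaAe
  have := h2.re
  refine this.congr (by filter_upwards with x; simp)

lemma realBeta_s11 {u v : ℝ} (hu : 0 < u) (hv : 0 < v) :
    ∫ x in Ioo (0:ℝ) 1, x ^ (u-1) * (1-x) ^ (v-1)
      = Real.Gamma u * Real.Gamma v / Real.Gamma (u+v) := by
  have key := Complex.Gamma_mul_Gamma_eq_betaIntegral (s := (u:ℂ)) (t := (v:ℂ))
    (by simpa using hu) (by simpa using hv)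
  rw [Complex.betaIntegral, intervalIntegral.integral_of_le zero_le_one] at key
  rw [← integral_Ioc_eq_integral_Ioo]
  have hβ : ∫ (x : ℝ) in Ioc 0 1, (x:ℂ) ^ ((u:ℂ) - 1) * (1 - (x:ℂ)) ^ ((v:ℂ) - 1) ∂volume =
      ((∫ x in Ioc (0:ℝ) 1, x ^ (u-1) * (1-x) ^ (v-1) : ℝ) : ℂ) := by
    rw [integral_Ioc_eq_integral_Ioo, integral_Ioc_eq_integral_Ioo (f := fun x : ℝ => x ^ (u-1) * (1-x) ^ (v-1))]
    rw [setIntegral_congr_fun measurableSet_Ioo (g := fun x : ℝ => ((x ^ (u-1) * (1-x) ^ (v-1) : ℝ) : ℂ)) ?_]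
    · exact integral_ofReal
    · intro x hx
      have h1 : (0:ℝ) ≤ x := hx.1.le
      have h2 : (0:ℝ) ≤ 1 - x := by linarith [hx.2]
      push_cast
      rw [Complex.ofReal_cpow h1, Complex.ofReal_cpow h2]
      push_cast
      ring
  rw [hβ, ← Complex.ofReal_add, Complex.Gamma_ofReal, Complex.Gamma_ofReal,
    Complex.Gamma_ofReal, ← Complex.ofReal_mul, ← Complex.ofReal_mul] at key
  have := Complex.ofReal_injective key
  have hG : Real.Gamma (u+v) ≠ 0 := (Real.Gamma_pos_of_pos (by linarith)).ne'
  field_simp [this]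
  rw [this]; ring


lemma substHasDeriv {x : ℝ} (hx : x ≠ 1) :
    HasDerivAt (fun y : ℝ => y / (1 - y)) (((1-x)^2)⁻¹) x := by
  have h : (1:ℝ) - x ≠ 0 := sub_ne_zero.mpr (Ne.symm hx)
  have := (hasDerivAt_id x).div ((hasDerivAt_const x 1).sub (hasDerivAt_id x)) h
  refine this.congr_deriv ?_
  show (1 * (1 - x) - x * (0 - 1)) / (1 - x) ^ 2 = ((1-x)^2)⁻¹
  rw [inv_eq_one_div]; congr 1; ring

lemma substImage : (fun x : ℝ => x / (1 - x)) '' Ioo 0 1 = Ioi 0 := by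
  ext t
  constructor
  · rintro ⟨x, hx, rfl⟩
    exact div_pos hx.1 (by linarith [hx.2])
  · intro ht
    have ht' : (0:ℝ) < t := ht
    refine ⟨t / (1 + t), ⟨div_pos ht' (by linarith), ?_⟩, ?_⟩
    · rw [div_lt_one (by linarith)]; linarith
    · have h1 : (1:ℝ) + t ≠ 0 := by positivity
      field_simp
      ring

lemma substInj : InjOn (fun x : ℝ => x / (1 - x)) (Ioo 0 1) := by
  intro x hx y hy h
  have h1 : (1:ℝ) - x ≠ 0 := by intro h'; nlinarith [hx.2]
  have h2 : (1:ℝ) - y ≠ 0 := by intro h'; nlinarith [hy.2]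
  field_simp at h
  nlinarith [h]

lemma substEq {u v : ℝ} {x : ℝ} (hx : x ∈ Ioo (0:ℝ) 1) :
    |((1-x)^2)⁻¹| • ((x / (1-x)) ^ (u-1) * (1 + x / (1-x)) ^ (-(u+v)))
      = x ^ (u-1) * (1-x) ^ (v-1) := by
  have h0 : (0:ℝ) < x := hx.1
  have h1 : (0:ℝ) < 1 - x := by linarith [hx.2]
  have e1 : (1:ℝ) + x / (1-x) = (1-x)⁻¹ := by field_simp; ring
  have e2 : |((1-x)^2)⁻¹| = (1-x) ^ (-2:ℝ) := by
    rw [abs_of_pos (by positivity), ← Real.rpow_natCast (1-x) 2, ← Real.rpow_neg h1.le]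
    norm_num
  rw [smul_eq_mul, e1, e2, div_eq_mul_inv, Real.mul_rpow h0.le (inv_nonneg.mpr h1.le),
    ← Real.rpow_neg_one (1-x), ← Real.rpow_mul h1.le, ← Real.rpow_mul h1.le]
  rw [show (1-x)^(-2:ℝ) * (x^(u-1) * (1-x)^(-1*(u-1)) * (1-x)^(-1*-(u+v)))
      = x^(u-1) * ((1-x)^(-2:ℝ) * (1-x)^(-1*(u-1)) * (1-x)^(-1*-(u+v))) from by ring,
    ← Real.rpow_add h1, ← Real.rpow_add h1]
  congr 1
  ring

lemma hasDerivWithin (x : ℝ) (hx : x ∈ Ioo (0:ℝ) 1) :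
    HasDerivWithinAt (fun y : ℝ => y / (1 - y)) (((1-x)^2)⁻¹) (Ioo 0 1) x :=
  (substHasDeriv hx.2.ne).hasDerivWithinAt

lemma betaIoiIntegrable {u v : ℝ} (hu : 0 < u) (hv : 0 < v) :
    IntegrableOn (fun t : ℝ => t ^ (u-1) * (1+t) ^ (-(u+v))) (Ioi 0) := by
  rw [← substImage,
    integrableOn_image_iff_integrableOn_abs_deriv_smul measurableSet_Ioo hasDerivWithin substInj]
  exact (realBetaIntegrable hu hv).congr_fun (fun x hx => (substEq hx).symm) measurableSet_Ioo

lemma betaIoi {u v : ℝ} (hu : 0 < u) (hv : 0 < v) :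
    ∫ t in Ioi (0:ℝ), t ^ (u-1) * (1+t) ^ (-(u+v))
      = Real.Gamma u * Real.Gamma v / Real.Gamma (u+v) := by
  rw [← substImage, integral_image_eq_integral_abs_deriv_smul measurableSet_Ioo
    hasDerivWithin substInj, ← realBeta_s11 hu hv]
  exact setIntegral_congr_fun measurableSet_Ioo fun x hx => substEq hx

lemma keyEq (b e a r : ℝ) (hr : 1 ≤ r) :
    ∫ u in Ioi (0:ℝ), (Ioc (0:ℝ) (r^2)).indicator
        (fun u => u ^ (b-1) * (1 - u/r^2) ^ e * (1+u) ^ (-a)) u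
      = (r^2) ^ b * ∫ t in (0:ℝ)..1, t ^ (b-1) * (1-t) ^ e * (1 + r^2*t) ^ (-a) := by
  have hr2 : (0:ℝ) < r^2 := by positivity
  rw [setIntegral_indicator measurableSet_Ioc,
    inter_eq_self_of_subset_right Ioc_subset_Ioi_self,
    ← intervalIntegral.integral_of_le hr2.le]
  have comp := intervalIntegral.integral_comp_mul_left
    (a := (0:ℝ)) (b := 1) (c := r^2)
    (f := fun u => u ^ (b-1) * (1 - u/r^2) ^ e * (1+u) ^ (-a)) hr2.ne'
  simp only [mul_zero, mul_one] at comp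
  have comp2 : (∫ u in (0:ℝ)..r^2, u ^ (b-1) * (1 - u/r^2) ^ e * (1+u) ^ (-a))
      = r^2 * ∫ t in (0:ℝ)..1,
          (r^2*t) ^ (b-1) * (1 - (r^2*t)/r^2) ^ e * (1 + r^2*t) ^ (-a) := by
    rw [comp, smul_eq_mul, ← mul_assoc, mul_inv_cancel₀ hr2.ne', one_mul]
  rw [comp2]
  have hcong : ∀ t ∈ uIcc (0:ℝ) 1,
      (r^2*t) ^ (b-1) * (1 - (r^2*t)/r^2) ^ e * (1 + r^2*t) ^ (-a)
        = (r^2) ^ (b-1) * (t ^ (b-1) * (1-t) ^ e * (1 + r^2*t) ^ (-a)) := by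
    intro t ht
    rw [uIcc_of_le zero_le_one] at ht
    rw [Real.mul_rpow hr2.le ht.1, mul_div_cancel_left₀ _ hr2.ne']
    ring
  rw [intervalIntegral.integral_congr hcong, intervalIntegral.integral_const_mul,
    ← mul_assoc]
  congr 1
  have h := Real.rpow_add hr2 1 (b-1)
  rw [Real.rpow_one] at h
  rw [show (1:ℝ)+(b-1) = b by ring] at h
  exact h.symm

lemma tendA (b e : ℝ) (hb : 0 < b) (he : 0 ≤ e) :
    Tendsto (fun r : ℝ => ∫ u in Ioi (0:ℝ), (Ioc (0:ℝ) (r^2)).indicator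
        (fun u => u ^ (b-1) * (1 - u/r^2) ^ e * (1+u) ^ (-(b+1/2))) u) atTop
      (𝓝 (Real.Gamma b * Real.Gamma (1/2) / Real.Gamma (b+1/2))) := by
  have hG : IntegrableOn (fun u : ℝ => u ^ (b-1) * (1+u) ^ (-(b+1/2))) (Ioi 0) :=
    betaIoiIntegrable hb one_half_pos
  rw [← betaIoi hb one_half_pos]
  apply tendsto_integral_filter_of_dominated_convergence
    (fun u : ℝ => u ^ (b-1) * (1+u) ^ (-(b+1/2)))
  · filter_upwards with r
    have cont : ContinuousOn
        (fun u : ℝ => u ^ (b-1) * (1 - u/r^2) ^ e * (1+u) ^ (-(b+1/2))) (Ioi 0) := by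
      apply ContinuousOn.mul
      apply ContinuousOn.mul
      · exact fun x hx =>
          (Real.continuousAt_rpow_const x _ (Or.inl (ne_of_gt hx))).continuousWithinAt
      · exact ((Real.continuous_rpow_const he).comp (by continuity)).continuousOn
      · intro x hx
        have hx0 : (0:ℝ) < 1 + x := by have := mem_Ioi.mp hx; linarith
        exact ((continuousAt_const.add continuousAt_id).rpow_const
          (Or.inl hx0.ne')).continuousWithinAt
    exact ((cont.aestronglyMeasurable measurableSet_Ioi).indicator measurableSet_Ioc)
  · filter_upwards [eventually_ge_atTop (1:ℝ)] with r hr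
    filter_upwards [ae_restrict_mem measurableSet_Ioi] with u hu
    have hu0 : (0:ℝ) < u := hu
    by_cases hu2 : u ∈ Ioc (0:ℝ) (r^2)
    · rw [indicator_of_mem hu2]
      have hle : u / r^2 ≤ 1 := div_le_one_of_le₀ hu2.2 (by positivity)
      have h01 : (0:ℝ) ≤ 1 - u/r^2 := by linarith
      have h11 : (1:ℝ) - u/r^2 ≤ 1 := by
        have : 0 ≤ u / r^2 := by positivity
        linarith
      rw [Real.norm_eq_abs, abs_of_nonneg (by positivity)]
      have hfac : (1 - u/r^2) ^ e ≤ 1 := Real.rpow_le_one h01 h11 he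
      have : u ^ (b-1) * (1 - u/r^2) ^ e ≤ u ^ (b-1) :=
        mul_le_of_le_one_right (Real.rpow_nonneg hu0.le _) hfac
      exact mul_le_mul_of_nonneg_right this (Real.rpow_nonneg (by positivity) _)
    · rw [indicator_of_notMem hu2]
      simp only [norm_zero]
      positivity
  · exact hG
  · filter_upwards [ae_restrict_mem measurableSet_Ioi] with u hu
    have hu0 : (0:ℝ) < u := hu
    have h1 : Tendsto (fun r : ℝ => 1 - u / r^2) atTop (𝓝 1) := by
      have hd : Tendsto (fun r : ℝ => u / r^2) atTop (𝓝 0) :=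
        Tendsto.div_atTop tendsto_const_nhds (tendsto_pow_atTop two_ne_zero)
      simpa using (tendsto_const_nhds (x := (1:ℝ)) (f := atTop)).sub hd
    have h2 : Tendsto (fun r : ℝ => (1 - u/r^2) ^ e) atTop (𝓝 1) := by
      have c : ContinuousAt (fun x : ℝ => x ^ e) 1 :=
        Real.continuousAt_rpow_const 1 e (Or.inl one_ne_zero)
      simpa [Real.one_rpow, Function.comp_def] using c.tendsto.comp h1
    have h3 : Tendsto (fun r : ℝ => u ^ (b-1) * (1 - u/r^2) ^ e * (1+u) ^ (-(b+1/2)))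
        atTop (𝓝 (u ^ (b-1) * (1+u) ^ (-(b+1/2)))) := by
      simpa using (h2.const_mul (u ^ (b-1))).mul_const ((1+u) ^ (-(b+1/2)))
    refine h3.congr' ?_
    filter_upwards [eventually_ge_atTop (max 1 u)] with r hr
    have hr1 : (1:ℝ) ≤ r := le_trans (le_max_left _ _) hr
    have hru : u ≤ r := le_trans (le_max_right _ _) hr
    have : u ∈ Ioc (0:ℝ) (r^2) := ⟨hu0, by nlinarith⟩
    rw [indicator_of_mem this]

end Aux

/-- For `l ≥ 1`, `d ≥ 2`, the function
`f_l(r) = r^l (Γ((l+d+1)/2)Γ(l/2)/(Γ(l+d/2)Γ(1/2))) ₂F₁(l/2,(l-1)/2;l+d/2;−r²)`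
satisfies `f_l(r)/r → 1` as `r → ∞`. -/
theorem stmt11 (d l : ℕ) (hd : 2 ≤ d) (hl : 1 ≤ l)
    (f : ℝ → ℝ)
    (hf : ∀ r : ℝ, f r = r ^ l *
      (Real.Gamma (((l : ℝ) + (d : ℝ) + 1) / 2) * Real.Gamma ((l : ℝ) / 2) /
        (Real.Gamma ((l : ℝ) + (d : ℝ) / 2) * Real.Gamma (1 / 2))) *
      Gauss2F1 ((l : ℝ) / 2) (((l : ℝ) - 1) / 2) ((l : ℝ) + (d : ℝ) / 2) (-(r ^ 2))) :
    Tendsto (fun r => f r / r) atTop (nhds 1) := by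
  have hd2 : (2:ℝ) ≤ (d:ℝ) := by exact_mod_cast hd
  rcases eq_or_lt_of_le hl with hl1 | hl2
  · -- l = 1
    have hb0 : (((l:ℝ)) - 1)/2 = 0 := by rw [← hl1]; norm_num
    have hΓ : Real.Gamma (((l:ℝ)+(d:ℝ)+1)/2) = Real.Gamma ((l:ℝ)+(d:ℝ)/2) := by
      congr 1
      rw [← hl1]
      push_cast
      ring
    have hΓl : Real.Gamma ((l:ℝ)/2) = Real.Gamma (1/2) := by rw [← hl1]; norm_num
    have hpos : 0 < Real.Gamma ((l:ℝ)+(d:ℝ)/2) := Real.Gamma_pos_of_pos (by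
      have : (1:ℝ) ≤ (l:ℝ) := by exact_mod_cast hl
      positivity)
    have hpos2 : 0 < Real.Gamma (1/2:ℝ) := Real.Gamma_pos_of_pos (by norm_num)
    apply Filter.Tendsto.congr' _ (tendsto_const_nhds (x := (1:ℝ)))
    filter_upwards [eventually_gt_atTop (0:ℝ)] with r hr
    rw [hf r, Gauss2F1, if_pos hb0, hΓ, hΓl, ← hl1]
    rw [div_self (by positivity), mul_one, mul_one, pow_one, div_self hr.ne']
  · -- 2 ≤ l
    have hl2' : (2:ℝ) ≤ (l:ℝ) := by exact_mod_cast hl2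
    have hb : 0 < ((l:ℝ)-1)/2 := by linarith
    have he : 0 ≤ ((l:ℝ)+(d:ℝ)/2) - ((l:ℝ)-1)/2 - 1 := by linarith
    have hG1 : 0 < Real.Gamma (((l:ℝ)+(d:ℝ)+1)/2) := Real.Gamma_pos_of_pos (by linarith)
    have hG2 : 0 < Real.Gamma (((l:ℝ)-1)/2 + 1/2) := Real.Gamma_pos_of_pos (by linarith)
    have hG3 : 0 < Real.Gamma ((l:ℝ)+(d:ℝ)/2) := Real.Gamma_pos_of_pos (by linarith)
    have hG4 : 0 < Real.Gamma (1/2:ℝ) := Real.Gamma_pos_of_pos (by norm_num)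
    have hG5 : 0 < Real.Gamma (((l:ℝ)-1)/2) := Real.Gamma_pos_of_pos hb
    set K : ℝ := Real.Gamma (((l:ℝ)+(d:ℝ)+1)/2) * Real.Gamma (((l:ℝ)-1)/2 + 1/2) /
        (Real.Gamma ((l:ℝ)+(d:ℝ)/2) * Real.Gamma (1/2)) *
      (Real.Gamma ((l:ℝ)+(d:ℝ)/2) /
        (Real.Gamma (((l:ℝ)-1)/2) * Real.Gamma ((l:ℝ)+(d:ℝ)/2 - ((l:ℝ)-1)/2))) with hK
    have main := (tendA (((l:ℝ)-1)/2) (((l:ℝ)+(d:ℝ)/2) - ((l:ℝ)-1)/2 - 1) hb he).const_mul K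
    have hKL : K * (Real.Gamma (((l:ℝ)-1)/2) * Real.Gamma (1/2) /
        Real.Gamma (((l:ℝ)-1)/2 + 1/2)) = 1 := by
      rw [hK, show (l:ℝ)+(d:ℝ)/2 - ((l:ℝ)-1)/2 = ((l:ℝ)+(d:ℝ)+1)/2 by ring]
      field_simp
      ring
      have hl0 : (0:ℝ) < l := by linarith
      exact mul_inv_cancel₀ (Real.Gamma_pos_of_pos (by positivity : (0:ℝ) < l * (1/2))).ne'
    rw [hKL] at main
    refine main.congr' ?_
    filter_upwards [eventually_ge_atTop (1:ℝ)] with r hr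
    have hr0 : (0:ℝ) < r := lt_of_lt_of_le one_pos hr
    have h1 : ((r:ℝ)^2)^(((l:ℝ)-1)/2) = r^((l:ℝ)-1) := by
      rw [← Real.rpow_natCast r 2, ← Real.rpow_mul hr0.le]
      congr 1
      push_cast
      ring
    have hrl0 : r * (r:ℝ)^((l:ℝ)-1) = r^l := by
      nth_rewrite 1 [← Real.rpow_one r]
      rw [← Real.rpow_add hr0, ← Real.rpow_natCast r l]
      congr 1
      push_cast
      ring
    have hrl : (r:ℝ)^l = r * (r^2)^(((l:ℝ)-1)/2) := by rw [h1, hrl0]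
    rw [keyEq (((l:ℝ)-1)/2) (((l:ℝ)+(d:ℝ)/2) - ((l:ℝ)-1)/2 - 1) (((l:ℝ)-1)/2 + 1/2) r hr,
      hf r, Gauss2F1, if_neg hb.ne']
    simp only [neg_mul, sub_neg_eq_add]
    rw [show ((l:ℝ))/2 = ((l:ℝ)-1)/2 + 1/2 by ring, hrl, hK, eq_div_iff hr0.ne']
    ring
end

section
/- For each R > 0, setting δ_R = R/√(1+R²) ∈ (0,1), there exists a constant C (depending on d) such that for all sufficiently large l, sup_{0 ≤ r ≤ R} f_l(r) ≤ C · l · R^l · (1+R²)^{−l/2}, and in particular sup_{r≤R} f_l(r) ≤ δ'^l eventually for any δ' ∈ (δ_R, 1). -/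
open MeasureTheory Filter

/-- Pointwise bound on the integrand (times `r^l`). -/
lemma stmt12_key_pt (d l : ℕ) (hd : 2 ≤ d) (hl : 4 ≤ l) {R r t : ℝ} (hR : 0 < R)
    (hr0 : 0 ≤ r) (hrR : r ≤ R) (ht0 : 0 ≤ t) (ht1 : t ≤ 1) :
    r ^ l * (t ^ (((l : ℝ) - 3) / 2) * (1 - t) ^ (((d : ℝ) + (l : ℝ) - 1) / 2)
      * (1 + r ^ 2 * t) ^ (-(l : ℝ) / 2))
    ≤ R ^ 3 * (R ^ 2 / (1 + R ^ 2)) ^ (((l : ℝ) - 3) / 2) := by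
  have hl' : (4 : ℝ) ≤ (l : ℝ) := by exact_mod_cast hl
  have hd' : (2 : ℝ) ≤ (d : ℝ) := by exact_mod_cast hd
  have ha : (0 : ℝ) ≤ ((l : ℝ) - 3) / 2 := by linarith
  have h1t : 0 ≤ 1 - t := by linarith
  have hden : 0 < 1 + r ^ 2 * t := by nlinarith [mul_nonneg (sq_nonneg r) ht0]
  have hv0 : 0 ≤ r ^ 2 / (1 + r ^ 2 * t) := div_nonneg (sq_nonneg r) hden.le
  have hvR : r ^ 2 / (1 + r ^ 2 * t) ≤ R ^ 2 := by
    have h1 : r ^ 2 / (1 + r ^ 2 * t) ≤ r ^ 2 :=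
      div_le_self (sq_nonneg r) (by nlinarith [mul_nonneg (sq_nonneg r) ht0])
    have h2 : r ^ 2 ≤ R ^ 2 := by nlinarith
    linarith
  set v : ℝ := r ^ 2 / (1 + r ^ 2 * t) with hv_def
  -- step 1 : fold r^l into the last factor
  have h1 : r ^ l * (1 + r ^ 2 * t) ^ (-(l : ℝ) / 2) = v ^ ((l : ℝ) / 2) := by
    rw [hv_def, Real.div_rpow (sq_nonneg r) hden.le,
      show (-(l : ℝ) / 2) = -((l : ℝ) / 2) by ring, Real.rpow_neg hden.le,
      div_eq_mul_inv ((r ^ 2) ^ ((l : ℝ) / 2)) ((1 + r ^ 2 * t) ^ ((l : ℝ) / 2))]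
    congr 1
    rw [show ((l : ℝ) / 2) = (1 / 2) * (l : ℝ) by ring, Real.rpow_mul (sq_nonneg r),
      Real.rpow_natCast, ← Real.sqrt_eq_rpow, Real.sqrt_sq hr0]
  have e1 : ((d : ℝ) + (l : ℝ) - 1) / 2 = ((l : ℝ) - 3) / 2 + ((d : ℝ) + 2) / 2 := by ring
  have e2 : (l : ℝ) / 2 = ((l : ℝ) - 3) / 2 + (3 : ℝ) / 2 := by ring
  have hsum1 : ((l : ℝ) - 3) / 2 + ((d : ℝ) + 2) / 2 ≠ 0 := by
    have : (0 : ℝ) < ((l : ℝ) - 3) / 2 + ((d : ℝ) + 2) / 2 := by linarith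
    exact this.ne'
  have hsum2 : ((l : ℝ) - 3) / 2 + (3 : ℝ) / 2 ≠ 0 := by
    have : (0 : ℝ) < ((l : ℝ) - 3) / 2 + (3 : ℝ) / 2 := by linarith
    exact this.ne'
  have hmain_eq : r ^ l * (t ^ (((l : ℝ) - 3) / 2) * (1 - t) ^ (((d : ℝ) + (l : ℝ) - 1) / 2)
      * (1 + r ^ 2 * t) ^ (-(l : ℝ) / 2))
      = (t * ((1 - t) * v)) ^ (((l : ℝ) - 3) / 2)
        * ((1 - t) ^ (((d : ℝ) + 2) / 2) * v ^ ((3 : ℝ) / 2)) := by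
    calc r ^ l * (t ^ (((l : ℝ) - 3) / 2) * (1 - t) ^ (((d : ℝ) + (l : ℝ) - 1) / 2)
          * (1 + r ^ 2 * t) ^ (-(l : ℝ) / 2))
        = t ^ (((l : ℝ) - 3) / 2) * (1 - t) ^ (((d : ℝ) + (l : ℝ) - 1) / 2)
          * (r ^ l * (1 + r ^ 2 * t) ^ (-(l : ℝ) / 2)) := by ring
      _ = t ^ (((l : ℝ) - 3) / 2)
          * (1 - t) ^ (((l : ℝ) - 3) / 2 + ((d : ℝ) + 2) / 2)
          * v ^ (((l : ℝ) - 3) / 2 + (3 : ℝ) / 2) := by rw [h1, e1, e2]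
      _ = t ^ (((l : ℝ) - 3) / 2)
          * ((1 - t) ^ (((l : ℝ) - 3) / 2) * (1 - t) ^ (((d : ℝ) + 2) / 2))
          * (v ^ (((l : ℝ) - 3) / 2) * v ^ ((3 : ℝ) / 2)) := by
            rw [Real.rpow_add' h1t hsum1, Real.rpow_add' hv0 hsum2]
      _ = (t * ((1 - t) * v)) ^ (((l : ℝ) - 3) / 2)
          * ((1 - t) ^ (((d : ℝ) + 2) / 2) * v ^ ((3 : ℝ) / 2)) := by
            rw [Real.mul_rpow ht0 (mul_nonneg h1t hv0), Real.mul_rpow h1t hv0]; ring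
  have hcore : t * ((1 - t) * v) ≤ R ^ 2 / (1 + R ^ 2) := by
    have hrepr : t * ((1 - t) * v) = (t * (1 - t) * r ^ 2) / (1 + r ^ 2 * t) := by
      rw [hv_def]; ring
    have s1 : t * ((1 - t) * v) ≤ r ^ 2 / (1 + r ^ 2) := by
      rw [hrepr, div_le_div_iff₀ hden (by positivity)]
      nlinarith [mul_nonneg (sq_nonneg r) h1t, mul_nonneg (sq_nonneg r) (sq_nonneg t),
        mul_nonneg (mul_nonneg (sq_nonneg r) (sq_nonneg r)) (sq_nonneg t)]
    have s2 : r ^ 2 / (1 + r ^ 2) ≤ R ^ 2 / (1 + R ^ 2) := by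
      rw [div_le_div_iff₀ (by positivity) (by positivity)]
      nlinarith
    linarith
  have hA : (t * ((1 - t) * v)) ^ (((l : ℝ) - 3) / 2)
      ≤ (R ^ 2 / (1 + R ^ 2)) ^ (((l : ℝ) - 3) / 2) :=
    Real.rpow_le_rpow (mul_nonneg ht0 (mul_nonneg h1t hv0)) hcore ha
  have hB : (1 - t) ^ (((d : ℝ) + 2) / 2) ≤ 1 :=
    Real.rpow_le_one h1t (by linarith) (by linarith)
  have hC : v ^ ((3 : ℝ) / 2) ≤ R ^ 3 := by
    calc v ^ ((3 : ℝ) / 2) ≤ (R ^ 2) ^ ((3 : ℝ) / 2) :=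
          Real.rpow_le_rpow hv0 hvR (by norm_num)
      _ = R ^ 3 := by
          rw [show ((3 : ℝ) / 2) = (1 / 2) * ((3 : ℕ) : ℝ) by norm_num,
            Real.rpow_mul (sq_nonneg R), Real.rpow_natCast, ← Real.sqrt_eq_rpow,
            Real.sqrt_sq hR.le]
  rw [hmain_eq]
  have hBC : (1 - t) ^ (((d : ℝ) + 2) / 2) * v ^ ((3 : ℝ) / 2) ≤ R ^ 3 := by
    calc (1 - t) ^ (((d : ℝ) + 2) / 2) * v ^ ((3 : ℝ) / 2) ≤ 1 * R ^ 3 :=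
          mul_le_mul hB hC (Real.rpow_nonneg hv0 _) zero_le_one
      _ = R ^ 3 := one_mul _
  calc (t * ((1 - t) * v)) ^ (((l : ℝ) - 3) / 2)
        * ((1 - t) ^ (((d : ℝ) + 2) / 2) * v ^ ((3 : ℝ) / 2))
      ≤ (R ^ 2 / (1 + R ^ 2)) ^ (((l : ℝ) - 3) / 2) * R ^ 3 :=
        mul_le_mul hA hBC
          (mul_nonneg (Real.rpow_nonneg h1t _) (Real.rpow_nonneg hv0 _))
          (Real.rpow_nonneg (by positivity) _)
    _ = R ^ 3 * (R ^ 2 / (1 + R ^ 2)) ^ (((l : ℝ) - 3) / 2) := mul_comm _ _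

/-- Integral bound. -/
lemma stmt12_key_int (d l : ℕ) (hd : 2 ≤ d) (hl : 4 ≤ l) {R r : ℝ} (hR : 0 < R)
    (hr0 : 0 ≤ r) (hrR : r ≤ R) :
    r ^ l * ∫ t in (0:ℝ)..1, t ^ (((l : ℝ) - 3) / 2) * (1 - t) ^ (((d : ℝ) + (l : ℝ) - 1) / 2)
      * (1 + r ^ 2 * t) ^ (-(l : ℝ) / 2)
    ≤ R ^ 3 * (R ^ 2 / (1 + R ^ 2)) ^ (((l : ℝ) - 3) / 2) := by
  have hl' : (4 : ℝ) ≤ (l : ℝ) := by exact_mod_cast hl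
  have hd' : (2 : ℝ) ≤ (d : ℝ) := by exact_mod_cast hd
  rw [← intervalIntegral.integral_const_mul]
  have hcont : ContinuousOn (fun t : ℝ => r ^ l * (t ^ (((l : ℝ) - 3) / 2)
      * (1 - t) ^ (((d : ℝ) + (l : ℝ) - 1) / 2) * (1 + r ^ 2 * t) ^ (-(l : ℝ) / 2)))
      (Set.Icc 0 1) := by
    apply ContinuousOn.mul continuousOn_const
    apply ContinuousOn.mul
    apply ContinuousOn.mul
    · exact (Real.continuous_rpow_const (by linarith)).continuousOn
    · exact ((Real.continuous_rpow_const (by linarith)).comp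
        (continuous_const.sub continuous_id)).continuousOn
    · refine ContinuousOn.rpow_const
        ((continuous_const.add (continuous_const.mul continuous_id)).continuousOn) ?_
      intro x hx
      left
      have : 0 < 1 + r ^ 2 * x := by nlinarith [mul_nonneg (sq_nonneg r) hx.1]
      exact this.ne'
  have hInt : IntervalIntegrable (fun t : ℝ => r ^ l * (t ^ (((l : ℝ) - 3) / 2)
      * (1 - t) ^ (((d : ℝ) + (l : ℝ) - 1) / 2) * (1 + r ^ 2 * t) ^ (-(l : ℝ) / 2)))
      volume 0 1 := by
    apply ContinuousOn.intervalIntegrable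
    rwa [Set.uIcc_of_le (zero_le_one)]
  calc (∫ t in (0:ℝ)..1, r ^ l * (t ^ (((l : ℝ) - 3) / 2)
        * (1 - t) ^ (((d : ℝ) + (l : ℝ) - 1) / 2) * (1 + r ^ 2 * t) ^ (-(l : ℝ) / 2)))
      ≤ ∫ _t in (0:ℝ)..1, R ^ 3 * (R ^ 2 / (1 + R ^ 2)) ^ (((l : ℝ) - 3) / 2) := by
        apply intervalIntegral.integral_mono_on zero_le_one hInt intervalIntegrable_const
        intro t ht
        exact stmt12_key_pt d l hd hl hR hr0 hrR ht.1 ht.2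
    _ = R ^ 3 * (R ^ 2 / (1 + R ^ 2)) ^ (((l : ℝ) - 3) / 2) := by simp

/-- The Gamma-function ratio is at most `l`. -/
lemma stmt12_gamma_le (l : ℕ) (hl : 4 ≤ l) :
    Real.Gamma ((l : ℝ) / 2) / (Real.Gamma (((l : ℝ) - 1) / 2) * Real.Gamma (1 / 2)) ≤ (l : ℝ) := by
  have hl' : (4 : ℝ) ≤ (l : ℝ) := by exact_mod_cast hl
  have hpos1 : 0 < Real.Gamma (((l : ℝ) - 1) / 2) := Real.Gamma_pos_of_pos (by linarith)
  have hhalf : (1 : ℝ) ≤ Real.Gamma (1 / 2) := by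
    rw [Real.Gamma_one_half_eq, show (1 : ℝ) = Real.sqrt 1 by simp]
    exact Real.sqrt_le_sqrt (by linarith [Real.pi_gt_three])
  have hmono : Real.Gamma ((l : ℝ) / 2) ≤ Real.Gamma (((l : ℝ) + 1) / 2) := by
    apply Real.Gamma_strictMonoOn_Ici.monotoneOn (Set.mem_Ici.mpr (by linarith))
      (Set.mem_Ici.mpr (by linarith)) (by linarith)
  have hrec : Real.Gamma (((l : ℝ) + 1) / 2)
      = (((l : ℝ) - 1) / 2) * Real.Gamma (((l : ℝ) - 1) / 2) := by
    rw [show ((l : ℝ) + 1) / 2 = ((l : ℝ) - 1) / 2 + 1 by ring,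
      Real.Gamma_add_one (show (((l : ℝ) - 1) / 2) ≠ 0 from
        (show (0 : ℝ) < ((l : ℝ) - 1) / 2 by linarith).ne')]
  rw [div_le_iff₀ (by positivity)]
  have h2 : (((l : ℝ) - 1) / 2) * Real.Gamma (((l : ℝ) - 1) / 2)
      ≤ (l : ℝ) * (Real.Gamma (((l : ℝ) - 1) / 2) * Real.Gamma (1 / 2)) := by
    nlinarith [mul_le_mul_of_nonneg_right (show ((l : ℝ) - 1) / 2 ≤ (l : ℝ) by linarith) hpos1.le,
      mul_le_mul_of_nonneg_left hhalf
        (show (0 : ℝ) ≤ (l : ℝ) * Real.Gamma (((l : ℝ) - 1) / 2) by positivity)]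
  linarith [hmono.trans_eq hrec]

/-- Geometric decay of `sup_{r ≤ R} f_l(r)` as `l → ∞`: with
`δ_R = R/√(1+R²)`, one has `sup_{0≤r≤R} f_l(r) ≤ C l R^l (1+R²)^(-l/2)` for large `l`,
and hence `sup_{r≤R} f_l(r) ≤ δ'^l` eventually, for any `δ' ∈ (δ_R, 1)`. -/
theorem stmt12 (d : ℕ) (hd : 2 ≤ d) (R : ℝ) (hR : 0 < R)
    (f : ℕ → ℝ → ℝ)
    (hf : ∀ l : ℕ, 2 ≤ l → ∀ r : ℝ, 0 ≤ r → f l r =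
      r ^ l * (Real.Gamma ((l : ℝ) / 2) / (Real.Gamma (((l : ℝ) - 1) / 2) * Real.Gamma (1 / 2))) *
        ∫ t in (0:ℝ)..1, t ^ (((l : ℝ) - 3) / 2) * (1 - t) ^ (((d : ℝ) + (l : ℝ) - 1) / 2)
          * (1 + r ^ 2 * t) ^ (-(l : ℝ) / 2)) :
    (∃ C : ℝ, ∀ᶠ l : ℕ in atTop, ∀ r ∈ Set.Icc (0 : ℝ) R,
        f l r ≤ C * l * R ^ l * (1 + R ^ 2) ^ (-(l : ℝ) / 2))
      ∧ ∀ δ' : ℝ, R / Real.sqrt (1 + R ^ 2) < δ' → δ' < 1 →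
          ∀ᶠ l : ℕ in atTop, ∀ r ∈ Set.Icc (0 : ℝ) R, f l r ≤ δ' ^ l := by
  have hP : (0 : ℝ) < 1 + R ^ 2 := by positivity
  have hS : 0 < Real.sqrt (1 + R ^ 2) := Real.sqrt_pos.mpr hP
  have hS2 : Real.sqrt (1 + R ^ 2) ^ 2 = 1 + R ^ 2 := Real.sq_sqrt hP.le
  -- rewrite the rpow factor as an inverse power of the square root
  have hrw : ∀ l : ℕ, (1 + R ^ 2 : ℝ) ^ (-(l : ℝ) / 2) = (Real.sqrt (1 + R ^ 2) ^ l)⁻¹ := by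
    intro l
    rw [show (-(l : ℝ) / 2) = -((1 / 2) * (l : ℝ)) by ring, Real.rpow_neg hP.le,
      Real.rpow_mul hP.le, Real.rpow_natCast, ← Real.sqrt_eq_rpow]
  -- main uniform bound
  have main : ∀ l : ℕ, 4 ≤ l → ∀ r ∈ Set.Icc (0 : ℝ) R,
      f l r ≤ ((1 + R ^ 2) * Real.sqrt (1 + R ^ 2)) * l * (R / Real.sqrt (1 + R ^ 2)) ^ l := by
    intro l hl r hr
    obtain ⟨hr0, hrR⟩ := hr
    have hl' : (4 : ℝ) ≤ (l : ℝ) := by exact_mod_cast hl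
    rw [hf l (by omega) r hr0]
    have hGpos : 0 ≤ Real.Gamma ((l : ℝ) / 2)
        / (Real.Gamma (((l : ℝ) - 1) / 2) * Real.Gamma (1 / 2)) := by
      apply div_nonneg (Real.Gamma_pos_of_pos (by linarith)).le
      exact (mul_pos (Real.Gamma_pos_of_pos (by linarith))
        (Real.Gamma_pos_of_pos (by norm_num))).le
    have hGle := stmt12_gamma_le l hl
    have hint := stmt12_key_int d l hd hl hR hr0 hrR
    have hDnn : (0 : ℝ) ≤ R ^ 3 * (R ^ 2 / (1 + R ^ 2)) ^ (((l : ℝ) - 3) / 2) := by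
      exact mul_nonneg (by positivity) (Real.rpow_nonneg (by positivity) _)
    have hDa : (R ^ 2 / (1 + R ^ 2)) ^ (((l : ℝ) - 3) / 2)
        = (R / Real.sqrt (1 + R ^ 2)) ^ (l - 3) := by
      have hc : ((l : ℝ) - 3) / 2 = (1 / 2) * (((l - 3 : ℕ)) : ℝ) := by
        rw [Nat.cast_sub (by omega)]; push_cast; ring
      rw [hc, Real.rpow_mul (by positivity), Real.rpow_natCast, ← Real.sqrt_eq_rpow,
        Real.sqrt_div (sq_nonneg R), Real.sqrt_sq hR.le]
    have hsplit : (R / Real.sqrt (1 + R ^ 2)) ^ l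
        = (R / Real.sqrt (1 + R ^ 2)) ^ (l - 3) * (R / Real.sqrt (1 + R ^ 2)) ^ 3 := by
      rw [← pow_add]; congr 1; omega
    have hfinal : R ^ 3 * (R / Real.sqrt (1 + R ^ 2)) ^ (l - 3)
        = (1 + R ^ 2) * Real.sqrt (1 + R ^ 2) * (R / Real.sqrt (1 + R ^ 2)) ^ l := by
      have hS3 : (1 + R ^ 2) * Real.sqrt (1 + R ^ 2) = Real.sqrt (1 + R ^ 2) ^ 3 := by
        rw [pow_succ (Real.sqrt (1 + R ^ 2)) 2, hS2]
      rw [hS3, hsplit, div_pow R _ 3]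
      field_simp
    calc r ^ l * (Real.Gamma ((l : ℝ) / 2)
            / (Real.Gamma (((l : ℝ) - 1) / 2) * Real.Gamma (1 / 2)))
          * ∫ t in (0:ℝ)..1, t ^ (((l : ℝ) - 3) / 2) * (1 - t) ^ (((d : ℝ) + (l : ℝ) - 1) / 2)
            * (1 + r ^ 2 * t) ^ (-(l : ℝ) / 2)
        = (Real.Gamma ((l : ℝ) / 2) / (Real.Gamma (((l : ℝ) - 1) / 2) * Real.Gamma (1 / 2)))
          * (r ^ l * ∫ t in (0:ℝ)..1, t ^ (((l : ℝ) - 3) / 2)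
            * (1 - t) ^ (((d : ℝ) + (l : ℝ) - 1) / 2) * (1 + r ^ 2 * t) ^ (-(l : ℝ) / 2)) := by
          ring
      _ ≤ (Real.Gamma ((l : ℝ) / 2) / (Real.Gamma (((l : ℝ) - 1) / 2) * Real.Gamma (1 / 2)))
          * (R ^ 3 * (R ^ 2 / (1 + R ^ 2)) ^ (((l : ℝ) - 3) / 2)) :=
          mul_le_mul_of_nonneg_left hint hGpos
      _ ≤ (l : ℝ) * (R ^ 3 * (R ^ 2 / (1 + R ^ 2)) ^ (((l : ℝ) - 3) / 2)) :=
          mul_le_mul_of_nonneg_right hGle hDnn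
      _ = (1 + R ^ 2) * Real.sqrt (1 + R ^ 2) * l * (R / Real.sqrt (1 + R ^ 2)) ^ l := by
          rw [hDa, hfinal]; ring
  constructor
  · refine ⟨(1 + R ^ 2) * Real.sqrt (1 + R ^ 2), ?_⟩
    filter_upwards [eventually_ge_atTop 4] with l hl
    intro r hr
    calc f l r ≤ (1 + R ^ 2) * Real.sqrt (1 + R ^ 2) * l * (R / Real.sqrt (1 + R ^ 2)) ^ l :=
          main l hl r hr
      _ = (1 + R ^ 2) * Real.sqrt (1 + R ^ 2) * l * R ^ l * (1 + R ^ 2) ^ (-(l : ℝ) / 2) := by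
          rw [hrw l, div_pow, div_eq_mul_inv]; ring
  · intro δ' hδ1 hδ2
    have hδpos : 0 < R / Real.sqrt (1 + R ^ 2) := div_pos hR hS
    have hδ'pos : 0 < δ' := lt_trans hδpos hδ1
    have hq0 : 0 ≤ (R / Real.sqrt (1 + R ^ 2)) / δ' := div_nonneg hδpos.le hδ'pos.le
    have hq1 : (R / Real.sqrt (1 + R ^ 2)) / δ' < 1 := by
      rw [div_lt_one hδ'pos]; exact hδ1
    have htend : Tendsto (fun l : ℕ => ((1 + R ^ 2) * Real.sqrt (1 + R ^ 2))
        * ((l : ℝ) * ((R / Real.sqrt (1 + R ^ 2)) / δ') ^ l)) atTop (nhds 0) := by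
      simpa using (tendsto_self_mul_const_pow_of_lt_one hq0 hq1).const_mul
        ((1 + R ^ 2) * Real.sqrt (1 + R ^ 2))
    have hev : ∀ᶠ l : ℕ in atTop, ((1 + R ^ 2) * Real.sqrt (1 + R ^ 2))
        * ((l : ℝ) * ((R / Real.sqrt (1 + R ^ 2)) / δ') ^ l) ≤ 1 :=
      htend.eventually (ge_mem_nhds zero_lt_one)
    filter_upwards [eventually_ge_atTop 4, hev] with l hl4 hlev r hr
    calc f l r ≤ (1 + R ^ 2) * Real.sqrt (1 + R ^ 2) * l * (R / Real.sqrt (1 + R ^ 2)) ^ l :=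
          main l hl4 r hr
      _ = ((1 + R ^ 2) * Real.sqrt (1 + R ^ 2)
          * ((l : ℝ) * ((R / Real.sqrt (1 + R ^ 2)) / δ') ^ l)) * δ' ^ l := by
          rw [div_pow (R / Real.sqrt (1 + R ^ 2)) δ' l]
          field_simp
      _ ≤ 1 * δ' ^ l :=
          mul_le_mul_of_nonneg_right hlev (pow_nonneg hδ'pos.le l)
      _ = δ' ^ l := one_mul _
end

section
/- Suppose u : ℝ^d → ℝ is continuous, u(0) = 0, and for every 0 < r < |x| one has |u(x)| ≤ sup_{|y|=r} |u(y)| + ((h(|x|) − h(r))/(h(R) − h(r))) · sup_{|y|=R} |u(y)| for all R > |x|, where h(r) = ∫₁^r ((1+u²)/u²)^{(d−1)/2} du. If additionally sup_{θ∈S^{d−1}} |u(Rθ)|/R → 0 as R → ∞, then u ≡ 0. -/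
open MeasureTheory Filter

private noncomputable def stmt14f (d : ℕ) : ℝ → ℝ :=
  fun s => ((1 + s ^ 2) / s ^ 2) ^ (((d : ℝ) - 1) / 2)

private lemma stmt14f_one_le (d : ℕ) (hd : 2 ≤ d) (s : ℝ) (hs : s ≠ 0) : 1 ≤ stmt14f d s := by
  apply Real.one_le_rpow
  · rw [le_div_iff₀ (by positivity)]
    nlinarith [sq_nonneg s]
  · have : (2:ℝ) ≤ (d:ℝ) := by exact_mod_cast hd
    linarith

private lemma stmt14f_integrable (d : ℕ) (a b : ℝ) (ha : 0 < a) (hb : 0 < b) :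
    IntervalIntegrable (stmt14f d) MeasureTheory.volume a b := by
  have hpos : ∀ x ∈ Set.uIcc a b, 0 < x := by
    intro x hx
    rcases Set.mem_uIcc.1 hx with ⟨h1, _⟩ | ⟨h1, _⟩ <;> linarith
  apply ContinuousOn.intervalIntegrable
  apply ContinuousOn.rpow_const
  · exact ContinuousOn.div (by fun_prop) (by fun_prop)
      (fun x hx => by have := hpos x hx; positivity)
  · exact fun x hx => Or.inl (by have := hpos x hx; positivity)

private lemma stmt14_hlower (d : ℕ) (hd : 2 ≤ d) (h : ℝ → ℝ)
    (hh : ∀ r : ℝ, h r = ∫ u in (1:ℝ)..r, ((1 + u ^ 2) / u ^ 2) ^ (((d : ℝ) - 1) / 2))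
    (R : ℝ) (hR : 1 ≤ R) : R - 1 ≤ h R := by
  have hhR : h R = ∫ s in (1:ℝ)..R, stmt14f d s := hh R
  rw [hhR]
  have h1 : (∫ s in (1:ℝ)..R, (1:ℝ)) ≤ ∫ s in (1:ℝ)..R, stmt14f d s := by
    apply intervalIntegral.integral_mono_on hR (intervalIntegrable_const)
      (stmt14f_integrable d 1 R one_pos (by linarith))
    intro x hx
    exact stmt14f_one_le d hd x (by nlinarith [hx.1])
  simpa using h1

/-- Uniqueness via the maximum-principle estimate: if a continuous `u` with `u(0) = 0`
satisfies `|u(x)| ≤ sup_{|y|=r}|u(y)| + ((h(|x|)-h(r))/(h(R)-h(r))) sup_{|y|=R}|u(y)|`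
for all `0 < r < |x| < R`, and `sup_{|y|=R}|u(y)|/R → 0`, then `u ≡ 0`. -/
theorem stmt14 (d : ℕ) (hd : 2 ≤ d)
    (h : ℝ → ℝ)
    (hh : ∀ r : ℝ, h r = ∫ u in (1:ℝ)..r, ((1 + u ^ 2) / u ^ 2) ^ (((d : ℝ) - 1) / 2))
    (u : EuclideanSpace ℝ (Fin d) → ℝ) (hu : Continuous u) (hu0 : u 0 = 0)
    (hmax : ∀ x : EuclideanSpace ℝ (Fin d), ∀ r R : ℝ, 0 < r → r < ‖x‖ → ‖x‖ < R →
      |u x| ≤ sSup ((fun y => |u y|) '' Metric.sphere (0 : EuclideanSpace ℝ (Fin d)) r)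
        + ((h ‖x‖ - h r) / (h R - h r)) *
            sSup ((fun y => |u y|) '' Metric.sphere (0 : EuclideanSpace ℝ (Fin d)) R))
    (hlim : Tendsto (fun R : ℝ =>
        sSup ((fun y => |u y|) '' Metric.sphere (0 : EuclideanSpace ℝ (Fin d)) R) / R)
      atTop (nhds 0)) :
    ∀ x, u x = 0 := by
  haveI : Nonempty (Fin d) := ⟨⟨0, by omega⟩⟩
  set M : ℝ → ℝ := fun R =>
    sSup ((fun y => |u y|) '' Metric.sphere (0 : EuclideanSpace ℝ (Fin d)) R) with hM
  -- nonemptiness & boundedness of image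
  have hne : ∀ R : ℝ, 0 ≤ R →
      ((fun y => |u y|) '' Metric.sphere (0 : EuclideanSpace ℝ (Fin d)) R).Nonempty :=
    fun R hR => (NormedSpace.sphere_nonempty.2 hR).image _
  have hbdd : ∀ R : ℝ, BddAbove ((fun y => |u y|) '' Metric.sphere (0 : EuclideanSpace ℝ (Fin d)) R) :=
    fun R => (isCompact_sphere _ _).bddAbove_image (hu.abs.continuousOn)
  have hM0 : ∀ R : ℝ, 0 ≤ R → 0 ≤ M R := by
    intro R hR
    obtain ⟨y, hy⟩ := (NormedSpace.sphere_nonempty (E := EuclideanSpace ℝ (Fin d)) (r := R)).2 hR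
    exact le_trans (abs_nonneg (u y)) (le_csSup (hbdd R) ⟨y, hy, rfl⟩)
  have hMle : ∀ R ε : ℝ, 0 ≤ R →
      (∀ y ∈ Metric.sphere (0 : EuclideanSpace ℝ (Fin d)) R, |u y| ≤ ε) → M R ≤ ε := by
    intro R ε hR hb
    exact csSup_le (hne R hR) (by rintro _ ⟨y, hy, rfl⟩; exact hb y hy)
  -- h lower bound
  have hlower : ∀ R : ℝ, 1 ≤ R → R - 1 ≤ h R := fun R hR => stmt14_hlower d hd h hh R hR
  -- key step: |u x| ≤ M r for 0 < r < ‖x‖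
  have key : ∀ x : EuclideanSpace ℝ (Fin d), ∀ r : ℝ, 0 < r → r < ‖x‖ → |u x| ≤ M r := by
    intro x r hr hrx
    set C : ℝ := h ‖x‖ - h r with hC
    have hten : Tendsto (fun R : ℝ => M r + C / (h R - h r) * M R) atTop (nhds (M r + 0)) := by
      apply Tendsto.const_add
      have hg : Tendsto (fun R : ℝ => (2 * |C|) * (M R / R)) atTop (nhds ((2 * |C|) * 0)) :=
        hlim.const_mul _
      rw [mul_zero] at hg
      apply squeeze_zero_norm' _ hg
      filter_upwards [eventually_ge_atTop (max 1 (2 * (1 + |h r|)))] with R hR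
      have hR1 : 1 ≤ R := le_trans (le_max_left _ _) hR
      have hR2 : 2 * (1 + |h r|) ≤ R := le_trans (le_max_right _ _) hR
      have hRpos : 0 < R := by linarith
      have hhr : h r ≤ |h r| := le_abs_self _
      have hden : R / 2 ≤ h R - h r := by
        have := hlower R hR1
        linarith
      have hdenpos : 0 < h R - h r := lt_of_lt_of_le (by linarith) hden
      have hMR : 0 ≤ M R := hM0 R (by linarith)
      rw [Real.norm_eq_abs, abs_mul, abs_div, abs_of_pos hdenpos]
      have h1 : |C| / (h R - h r) ≤ |C| / (R / 2) :=
        div_le_div_of_nonneg_left (abs_nonneg _) (by linarith) hden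
      calc |C| / (h R - h r) * |M R| = |C| / (h R - h r) * M R := by rw [abs_of_nonneg hMR]
        _ ≤ |C| / (R / 2) * M R := by
            exact mul_le_mul_of_nonneg_right h1 hMR
        _ = 2 * |C| * (M R / R) := by ring
    rw [add_zero] at hten
    refine ge_of_tendsto hten ?_
    filter_upwards [eventually_gt_atTop ‖x‖] with R hxR
    have := hmax x r R hr hrx hxR
    simpa [hM, hC] using this
  -- conclude
  intro x
  rcases eq_or_ne x 0 with rfl | hx
  · exact hu0
  · have hxn : 0 < ‖x‖ := norm_pos_iff.2 hx
    have hsmall : ∀ ε : ℝ, 0 < ε → |u x| ≤ ε := by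
      intro ε hε
      obtain ⟨δ, hδ, hδ'⟩ := Metric.continuous_iff.1 hu 0 ε hε
      set r : ℝ := min (δ / 2) (‖x‖ / 2) with hrdef
      have hr : 0 < r := lt_min (by linarith) (by linarith)
      have hrx : r < ‖x‖ := lt_of_le_of_lt (min_le_right _ _) (by linarith)
      refine le_trans (key x r hr hrx) (hMle r ε hr.le ?_)
      intro y hy
      have : dist y 0 < δ := by
        rw [Metric.mem_sphere] at hy
        rw [hy]
        exact lt_of_le_of_lt (min_le_left _ _) (by linarith)
      have := hδ' y this
      rw [hu0, dist_zero_right] at this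
      exact le_of_lt (by simpa using this)
    have : |u x| ≤ 0 := le_of_forall_pos_le_add (by intro ε hε; simpa using hsmall ε hε)
    exact abs_nonpos_iff.1 this
end
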